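/- Let β, β' ∈ Δ with β ≠ β', and let α, α' ∈ R⁺ be such that s_β s_{β'} = s_α s_{α'} in W. Then α ∈ {β, β'} or α' ∈ {β, β'}. -/

import Mathlib

/- Setting: a reduced, irreducible, crystallographic, simply laced root system `roots`
in a real inner product space `V`, with a fixed base `base` of simple roots,
its Weyl group (generated by the reflections in the simple roots), the length
function, the (strong) Bruhat order, the weak left Bruhat order, the sets
`A_ℓ(v)`, `A(v)`, `D(w)`, `AD(v,w)`, and the partial order on roots induced
by the base. -/

open scoped InnerProductSpace Classical

noncomputable section

variable {V : Type*} [NormedAddCommGroup V] [InnerProductSpace ℝ V]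

/-- The underlying linear map of the reflection `s_α : x ↦ x - (2⟪x,α⟫/⟪α,α⟫) α`. -/
def reflMap (α : V) : V →ₗ[ℝ] V where
  toFun x := x - (2 * ⟪x, α⟫_ℝ / ⟪α, α⟫_ℝ) • α
  map_add' x y := by
    simp only [inner_add_left]
    rw [show 2 * (⟪x, α⟫_ℝ + ⟪y, α⟫_ℝ) / ⟪α, α⟫_ℝ
        = 2 * ⟪x, α⟫_ℝ / ⟪α, α⟫_ℝ + 2 * ⟪y, α⟫_ℝ / ⟪α, α⟫_ℝ by ring]
    rw [add_smul]
    abel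
  map_smul' c x := by
    simp only [real_inner_smul_left, RingHom.id_apply, smul_sub, smul_smul]
    rw [show 2 * (c * ⟪x, α⟫_ℝ) / ⟪α, α⟫_ℝ = c * (2 * ⟪x, α⟫_ℝ / ⟪α, α⟫_ℝ) by ring]

theorem reflMap_involutive (α : V) : Function.Involutive (reflMap α) := by
  intro x
  by_cases h : (⟪α, α⟫_ℝ) = (0 : ℝ)
  · have hα : α = 0 := inner_self_eq_zero.mp h
    simp [reflMap, hα]
  · show reflMap α (x - (2 * ⟪x, α⟫_ℝ / ⟪α, α⟫_ℝ) • α) = x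
    show (x - (2 * ⟪x, α⟫_ℝ / ⟪α, α⟫_ℝ) • α)
        - (2 * ⟪x - (2 * ⟪x, α⟫_ℝ / ⟪α, α⟫_ℝ) • α, α⟫_ℝ / ⟪α, α⟫_ℝ) • α = x
    have h1 : ⟪x - (2 * ⟪x, α⟫_ℝ / ⟪α, α⟫_ℝ) • α, α⟫_ℝ = -⟪x, α⟫_ℝ := by
      rw [inner_sub_left, real_inner_smul_left]
      field_simp
      ring
    rw [h1, show 2 * -⟪x, α⟫_ℝ / ⟪α, α⟫_ℝ = -(2 * ⟪x, α⟫_ℝ / ⟪α, α⟫_ℝ) by ring,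
      neg_smul, sub_neg_eq_add, sub_add_cancel]

/-- The reflection `s_α` in the hyperplane orthogonal to `α`,
as a linear automorphism of `V`. -/
def sRefl (α : V) : V ≃ₗ[ℝ] V := LinearEquiv.ofInvolutive (reflMap α) (reflMap_involutive α)

/-- A reduced, irreducible, crystallographic, simply laced root system in the real
inner product space `V`, together with a choice of base (system of simple roots)
and the corresponding coordinate function `coeff α β = n_β(α)`. -/
structure SimplyLacedRootSystem (V : Type*) [NormedAddCommGroup V]
    [InnerProductSpace ℝ V] : Type _ where
  /-- the set `R` of roots -/
  roots : Set V
  /-- the base `Δ` of simple roots -/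
  base : Finset V
  finite : roots.Finite
  nonzero : ∀ α ∈ roots, α ≠ 0
  span_eq_top : Submodule.span ℝ roots = ⊤
  /-- the root system is reduced -/
  reduced : ∀ α ∈ roots, ∀ t : ℝ, t • α ∈ roots → t = 1 ∨ t = -1
  /-- the root system is crystallographic: all `⟨γ,α⟩ = 2(γ,α)/(α,α)` are integers -/
  crystallographic : ∀ α ∈ roots, ∀ γ ∈ roots, ∃ n : ℤ, 2 * ⟪γ, α⟫_ℝ / ⟪α, α⟫_ℝ = (n : ℝ)
  reflect_mem : ∀ α ∈ roots, ∀ γ ∈ roots, sRefl α γ ∈ roots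
  /-- the root system is simply laced: all roots have the same length -/
  simplyLaced : ∀ α ∈ roots, ∀ γ ∈ roots, ⟪α, α⟫_ℝ = ⟪γ, γ⟫_ℝ
  /-- the root system is irreducible -/
  irreducible : ∀ R₁ R₂ : Set V, R₁ ∪ R₂ = roots →
    (∀ α ∈ R₁, ∀ γ ∈ R₂, ⟪α, γ⟫_ℝ = 0) → R₁ = ∅ ∨ R₂ = ∅
  base_subset : ↑base ⊆ roots
  base_indep : LinearIndependent ℝ (Subtype.val : {x : V // x ∈ base} → V)
  /-- `coeff α β` is the coefficient `n_β(α)` of the simple root `β` in `α` -/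
  coeff : V → V → ℝ
  coeff_spec : ∀ α ∈ roots, α = ∑ β ∈ base, coeff α β • β
  coeff_int : ∀ α ∈ roots, ∀ β ∈ base, ∃ n : ℤ, coeff α β = (n : ℝ)
  coeff_sign : ∀ α ∈ roots, (∀ β ∈ base, 0 ≤ coeff α β) ∨ (∀ β ∈ base, coeff α β ≤ 0)

namespace SimplyLacedRootSystem

variable (P : SimplyLacedRootSystem V)

/-- The set `R⁺` of positive roots. -/
def pos : Set V := {α ∈ P.roots | ∀ β ∈ P.base, 0 ≤ P.coeff α β}

/-- The support `Δ(α) = {β ∈ Δ : n_β(α) > 0}` of a (positive) root `α`. -/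
def support (α : V) : Finset V := P.base.filter (fun β => 0 < P.coeff α β)

/-- `N⁺(α,β) = {β' ∈ Δ(α) : (β,β') < 0 and (α,β') > 0}`. -/
def Nplus (α β : V) : Finset V :=
  (P.support α).filter (fun β' => ⟪β, β'⟫_ℝ < 0 ∧ 0 < ⟪α, β'⟫_ℝ)

/-- `N⁻(α,β) = {β' ∈ Δ(α) : (β,β') < 0 and (α,β') ≤ 0}`. -/
def Nminus (α β : V) : Finset V :=
  (P.support α).filter (fun β' => ⟪β, β'⟫_ℝ < 0 ∧ ⟪α, β'⟫_ℝ ≤ 0)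

/-- The partial order on `V` induced by the base: `x ≤ y` iff `y - x` is a
nonnegative linear combination of the simple roots. -/
def rle (x y : V) : Prop :=
  ∃ c : V → ℝ, (∀ β, 0 ≤ c β) ∧ y - x = ∑ β ∈ P.base, c β • β

/-- The strict version of the partial order `rle` on roots. -/
def rlt (x y : V) : Prop := P.rle x y ∧ x ≠ y

/-- `α` is a minimal element of the set `S` with respect to the partial order on roots. -/
def IsMinimalIn (α : V) (S : Set V) : Prop := α ∈ S ∧ ∀ γ ∈ S, ¬ P.rlt γ α

/-- The Weyl group `W`, i.e. the subgroup of `GL(V)` generated by the reflections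
in the simple roots (equivalently, by all the reflections `s_α`, `α ∈ R`). -/
def weyl : Subgroup (V ≃ₗ[ℝ] V) := Subgroup.closure (sRefl '' ↑P.base)

/-- The length function `ℓ` of `W` with respect to the simple reflections. -/
def len (w : V ≃ₗ[ℝ] V) : ℕ :=
  sInf {n | ∃ l : List V, l.length = n ∧ (∀ β ∈ l, β ∈ P.base) ∧ (l.map sRefl).prod = w}

/-- One step in the Bruhat order: multiplication by the reflection of a positive
root which increases the length. -/
def bStep (u w : V ≃ₗ[ℝ] V) : Prop :=
  ∃ α ∈ P.pos, w = sRefl α * u ∧ P.len u < P.len w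

/-- The (strong) Bruhat order `≤` on `W`. -/
def ble : (V ≃ₗ[ℝ] V) → (V ≃ₗ[ℝ] V) → Prop := Relation.ReflTransGen P.bStep

/-- The strict (strong) Bruhat order `<` on `W`. -/
def blt (u w : V ≃ₗ[ℝ] V) : Prop := P.ble u w ∧ u ≠ w

/-- The covering relation `⋖` of the Bruhat order. -/
def bcov (u w : V ≃ₗ[ℝ] V) : Prop := P.blt u w ∧ P.len w = P.len u + 1

/-- One step in the weak left Bruhat order. -/
def wlStep (u w : V ≃ₗ[ℝ] V) : Prop :=
  ∃ β ∈ P.base, w = sRefl β * u ∧ P.len u < P.len w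

/-- The weak left Bruhat order `≤_ℓ` on `W`. -/
def wle : (V ≃ₗ[ℝ] V) → (V ≃ₗ[ℝ] V) → Prop := Relation.ReflTransGen P.wlStep

/-- `A_ℓ(v) = {β ∈ Δ : v < s_β v}`. -/
def Al (v : V ≃ₗ[ℝ] V) : Set V := {β : V | β ∈ P.base ∧ P.blt v (sRefl β * v)}

/-- `A(v) = {α ∈ R⁺ : v⁻¹(α) > 0}`. -/
def A (v : V ≃ₗ[ℝ] V) : Set V := {α ∈ P.pos | v⁻¹ α ∈ P.pos}

/-- `D(w) = {α ∈ R⁺ : w⁻¹(α) < 0}`. -/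
def Dset (w : V ≃ₗ[ℝ] V) : Set V := {α ∈ P.pos | -(w⁻¹ α) ∈ P.pos}

/-- `AD(v,w) = A(v) ∩ D(w)`. -/
def ADset (v w : V ≃ₗ[ℝ] V) : Set V := P.A v ∩ P.Dset w

end SimplyLacedRootSystem
namespace SimplyLacedRootSystem

variable {P : SimplyLacedRootSystem V}

lemma sRefl_apply (γ x : V) :
    sRefl γ x = x - (2 * ⟪x, γ⟫_ℝ / ⟪γ, γ⟫_ℝ) • γ := rfl

lemma sRefl_invol (γ x : V) : sRefl γ (sRefl γ x) = x :=
  reflMap_involutive γ x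

lemma sRefl_fix {γ x : V} (h : ⟪x, γ⟫_ℝ = 0) : sRefl γ x = x := by
  simp [sRefl_apply, h]

lemma sum_base_eq_zero (c : V → ℝ) (h : ∑ δ ∈ P.base, c δ • δ = 0) :
    ∀ δ ∈ P.base, c δ = 0 := by
  have H := linearIndependent_iff'.1 P.base_indep P.base.attach
    (fun i => c i.val) ?_
  · intro δ hδ; exact H ⟨δ, hδ⟩ (Finset.mem_attach _ _)
  · rw [← h]
    exact Finset.sum_attach P.base (fun δ => c δ • δ)

lemma coeff_eq {γ : V} (hγ : γ ∈ P.roots) (c : V → ℝ)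
    (h : γ = ∑ δ ∈ P.base, c δ • δ) : ∀ δ ∈ P.base, P.coeff γ δ = c δ := by
  have h0 : ∑ δ ∈ P.base, (P.coeff γ δ - c δ) • δ = 0 := by
    simp only [sub_smul, Finset.sum_sub_distrib]
    rw [← P.coeff_spec γ hγ, ← h, sub_self]
  intro δ hδ
  have := sum_base_eq_zero _ h0 δ hδ
  linarith

lemma pair_fun_sum {β β' : V} (hβ : β ∈ P.base) (hβ' : β' ∈ P.base) (a b : ℝ) :
    ∑ δ ∈ P.base, ((if δ = β then a else 0) + (if δ = β' then b else 0)) • δ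
      = a • β + b • β' := by
  simp only [add_smul, Finset.sum_add_distrib, ite_smul, zero_smul]
  rw [Finset.sum_ite_eq' P.base β (fun δ => a • δ),
    Finset.sum_ite_eq' P.base β' (fun δ => b • δ)]
  simp [hβ, hβ']

lemma pair_indep {β β' : V} (hβ : β ∈ P.base) (hβ' : β' ∈ P.base) (hne : β ≠ β')
    {a b : ℝ} (h : a • β + b • β' = 0) : a = 0 ∧ b = 0 := by
  have h0 : ∑ δ ∈ P.base,
      ((if δ = β then a else 0) + (if δ = β' then b else 0)) • δ = 0 := by
    rw [pair_fun_sum hβ hβ']; exact h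
  have ha := sum_base_eq_zero _ h0 β hβ
  have hb := sum_base_eq_zero _ h0 β' hβ'
  constructor
  · simpa [hne] using ha
  · simpa [Ne.symm hne] using hb

lemma inner_self_pos_of_root {γ : V} (hγ : γ ∈ P.roots) : 0 < ⟪γ, γ⟫_ℝ := by
  rcases (real_inner_self_nonneg : 0 ≤ ⟪γ, γ⟫_ℝ).lt_or_eq with h | h
  · exact h
  · exact absurd (inner_self_eq_zero.1 h.symm) (P.nonzero γ hγ)

lemma pos_mem_roots {γ : V} (hγ : γ ∈ P.pos) : γ ∈ P.roots := hγ.1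

/-- A positive root cannot be the negative of a positive root. -/
lemma pos_ne_neg {α α' : V} (hα : α ∈ P.pos) (hα' : α' ∈ P.pos) : α ≠ -α' := by
  intro h
  have hr := pos_mem_roots hα
  have hr' := pos_mem_roots hα'
  have hc : ∀ δ ∈ P.base, P.coeff α δ = -(P.coeff α' δ) := by
    apply coeff_eq hr
    rw [h]
    conv_lhs => rw [P.coeff_spec α' hr']
    simp [neg_smul, Finset.sum_neg_distrib]
  have hzero : ∀ δ ∈ P.base, P.coeff α' δ = 0 := by
    intro δ hδ
    have h1 := hα.2 δ hδ
    have h2 := hα'.2 δ hδ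
    have := hc δ hδ
    linarith
  have : α' = 0 := by
    rw [P.coeff_spec α' hr']
    apply Finset.sum_eq_zero
    intro δ hδ
    rw [hzero δ hδ, zero_smul]
  exact P.nonzero α' hr' this

/-- Two distinct positive roots are not parallel. -/
lemma not_parallel {α α' : V} (hα : α ∈ P.pos) (hα' : α' ∈ P.pos) (hne : α ≠ α')
    {c c' : ℝ} (h : c • α = c' • α') : c = 0 ∧ c' = 0 := by
  have hr := pos_mem_roots hα
  have hr' := pos_mem_roots hα'
  have hc : c = 0 := by
    by_contra hc0
    have hαeq : α = (c' / c) • α' := by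
      rw [div_eq_inv_mul, mul_smul, ← h, smul_smul, inv_mul_cancel₀ hc0, one_smul]
    have hmem : (c' / c) • α' ∈ P.roots := hαeq ▸ hr
    rcases P.reduced α' hr' (c' / c) hmem with h1 | h1
    · apply hne; rw [hαeq, h1, one_smul]
    · apply pos_ne_neg hα hα'
      rw [hαeq, h1, neg_one_smul]
  refine ⟨hc, ?_⟩
  rw [hc, zero_smul] at h
  have := P.nonzero α' hr'
  rcases smul_eq_zero.1 h.symm with h2 | h2
  · exact h2
  · exact absurd h2 this

end SimplyLacedRootSystem
namespace SimplyLacedRootSystem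

variable {P : SimplyLacedRootSystem V}

/-- If `x` is fixed by `s_α s_{α'}` for distinct positive roots `α ≠ α'`,
then `x` is orthogonal to both. -/
lemma perp_of_fix {α α' : V} (hα : α ∈ P.pos) (hα' : α' ∈ P.pos) (hne : α ≠ α')
    {x : V} (hfix : sRefl α (sRefl α' x) = x) :
    ⟪x, α⟫_ℝ = 0 ∧ ⟪x, α'⟫_ℝ = 0 := by
  have h1 : sRefl α' x = sRefl α x := by
    have := congrArg (fun y => sRefl α y) hfix
    simpa [sRefl_invol] using this
  rw [sRefl_apply, sRefl_apply] at h1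
  have h2 := congrArg (fun y => x - y) h1
  simp only [sub_sub_cancel] at h2
  obtain ⟨hc', hc⟩ := not_parallel hα' hα (Ne.symm hne) h2
  have hip := inner_self_pos_of_root (pos_mem_roots hα)
  have hip' := inner_self_pos_of_root (pos_mem_roots hα')
  constructor
  · rcases div_eq_zero_iff.1 hc with h | h
    · linarith
    · linarith
  · rcases div_eq_zero_iff.1 hc' with h | h
    · linarith
    · linarith

/-- A vector orthogonal to everything orthogonal to `β, β'` lies in their span. -/
lemma mem_span_pair_of_perp {β β' α : V}
    (hperp : ∀ x : V, ⟪x, β⟫_ℝ = 0 → ⟪x, β'⟫_ℝ = 0 → ⟪x, α⟫_ℝ = 0) :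
    ∃ a b : ℝ, α = a • β + b • β' := by
  set K : Submodule ℝ V := Submodule.span ℝ ({β, β'} : Set V) with hK
  haveI : FiniteDimensional ℝ K :=
    FiniteDimensional.span_of_finite ℝ ((Set.finite_singleton β').insert β)
  obtain ⟨y, hy, z, hz, hv⟩ := K.exists_add_mem_mem_orthogonal α
  have hzβ : ⟪z, β⟫_ℝ = 0 := by
    rw [real_inner_comm]
    exact (Submodule.mem_orthogonal K z).1 hz β
      (Submodule.subset_span (Set.mem_insert β {β'}))
  have hzβ' : ⟪z, β'⟫_ℝ = 0 := by
    rw [real_inner_comm]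
    exact (Submodule.mem_orthogonal K z).1 hz β'
      (Submodule.subset_span (Set.mem_insert_of_mem β rfl))
  have hzα : ⟪z, α⟫_ℝ = 0 := hperp z hzβ hzβ'
  have hzy : ⟪z, y⟫_ℝ = 0 := by
    rw [real_inner_comm]
    exact (Submodule.mem_orthogonal K z).1 hz y hy
  have hzz : ⟪z, z⟫_ℝ = 0 := by
    have : ⟪z, α⟫_ℝ = ⟪z, y⟫_ℝ + ⟪z, z⟫_ℝ := by rw [hv, inner_add_right]
    linarith
  have hz0 : z = 0 := inner_self_eq_zero.1 hzz
  have hαK : α ∈ K := by rw [hv, hz0, add_zero]; exact hy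
  obtain ⟨a, b, hab⟩ := Submodule.mem_span_pair.1 hαK
  exact ⟨a, b, hab.symm⟩

end SimplyLacedRootSystem
lemma stmt16_int_solve {na nb m : ℤ} (ha : 0 ≤ na) (hb : 0 ≤ nb)
    (hm : m = 0 ∨ m = -1) (hE : na ^ 2 + na * nb * m + nb ^ 2 = 1) :
    (na = 1 ∧ nb = 0) ∨ (na = 0 ∧ nb = 1) ∨ (na = 1 ∧ nb = 1) := by
  rcases hm with rfl | rfl
  · have h1 : na ≤ 1 := by nlinarith
    have h2 : nb ≤ 1 := by nlinarith
    interval_cases na <;> interval_cases nb <;> omega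
  · have h1 : na ≤ 1 := by nlinarith [sq_nonneg (na - nb), mul_nonneg ha hb]
    have h2 : nb ≤ 1 := by nlinarith [sq_nonneg (na - nb), mul_nonneg ha hb]
    interval_cases na <;> interval_cases nb <;> omega

namespace SimplyLacedRootSystem

variable {P : SimplyLacedRootSystem V}

/-- A positive root lying in the span of two distinct simple roots is one of
`β`, `β'`, `β + β'`. -/
lemma classify {β β' α : V} (hβ : β ∈ P.base) (hβ' : β' ∈ P.base) (hne : β ≠ β')
    (hα : α ∈ P.pos) {a b : ℝ} (hab : α = a • β + b • β') :
    α = β ∨ α = β' ∨ α = β + β' := by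
  have hβr : β ∈ P.roots := P.base_subset hβ
  have hβ'r : β' ∈ P.roots := P.base_subset hβ'
  have hαr : α ∈ P.roots := hα.1
  have hN : 0 < ⟪β, β⟫_ℝ := inner_self_pos_of_root hβr
  have hN' : ⟪β', β'⟫_ℝ = ⟪β, β⟫_ℝ := P.simplyLaced β' hβ'r β hβr
  set N := ⟪β, β⟫_ℝ with hNdef
  -- coefficients of α are a and b
  have hcoeff := coeff_eq hαr
    (fun δ => (if δ = β then a else 0) + (if δ = β' then b else 0))
    (by rw [pair_fun_sum hβ hβ']; exact hab)
  have hca : P.coeff α β = a := by simpa [hne] using hcoeff β hβ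
  have hcb : P.coeff α β' = b := by simpa [Ne.symm hne] using hcoeff β' hβ'
  have ha0 : 0 ≤ a := hca ▸ hα.2 β hβ
  have hb0 : 0 ≤ b := hcb ▸ hα.2 β' hβ'
  obtain ⟨na, hna⟩ := P.coeff_int α hαr β hβ
  obtain ⟨nb, hnb⟩ := P.coeff_int α hαr β' hβ'
  rw [hca] at hna; rw [hcb] at hnb
  -- the Cartan integer m
  obtain ⟨m, hm⟩ := P.crystallographic β hβr β' hβ'r
  have hMval : ⟪β', β⟫_ℝ = (m : ℝ) * N / 2 := by
    rw [← hNdef, div_eq_iff (ne_of_gt hN)] at hm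
    linarith
  have hM2 : ⟪β, β'⟫_ℝ = (m : ℝ) * N / 2 := by rw [real_inner_comm]; exact hMval
  -- m ≤ 0
  have hrefl : sRefl β β' ∈ P.roots := P.reflect_mem β hβr β' hβ'r
  have hreq : sRefl β β' = (-(m : ℝ)) • β + (1 : ℝ) • β' := by
    rw [sRefl_apply, hm]
    rw [neg_smul, one_smul]
    abel
  have hc2 := coeff_eq hrefl
    (fun δ => (if δ = β then (-(m : ℝ)) else 0) + (if δ = β' then (1 : ℝ) else 0))
    (by rw [pair_fun_sum hβ hβ']; exact hreq)
  have hc2a : P.coeff (sRefl β β') β = -(m : ℝ) := by simpa [hne] using hc2 β hβ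
  have hc2b : P.coeff (sRefl β β') β' = 1 := by simpa [Ne.symm hne] using hc2 β' hβ'
  have hm0 : (m : ℝ) ≤ 0 := by
    rcases P.coeff_sign (sRefl β β') hrefl with h | h
    · have := h β hβ; rw [hc2a] at this; linarith
    · have := h β' hβ'; rw [hc2b] at this; linarith
  -- m ≥ -2, with equality impossible
  have hsum : ⟪β + β', β + β'⟫_ℝ = 2 * N + (m : ℝ) * N := by
    rw [real_inner_add_add_self, hM2, hN']
    ring
  have hm2 : -2 < (m : ℝ) := by
    rcases lt_or_eq_of_le (real_inner_self_nonneg (x := β + β')) with h | h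
    · rw [hsum] at h; nlinarith
    · exfalso
      have hz : β + β' = 0 := inner_self_eq_zero.1 h.symm
      have := pair_indep hβ hβ' hne (a := 1) (b := 1) (by rw [one_smul, one_smul]; exact hz)
      exact one_ne_zero this.1
  -- the norm equation
  have hnorm : ⟪α, α⟫_ℝ = N := P.simplyLaced α hαr β hβr
  have hexp : ⟪α, α⟫_ℝ = a ^ 2 * N + a * b * ((m : ℝ) * N) + b ^ 2 * N := by
    rw [hab, real_inner_add_add_self]
    rw [real_inner_smul_left, real_inner_smul_right, real_inner_smul_left,
      real_inner_smul_right, real_inner_smul_left, real_inner_smul_right]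
    rw [hM2, hN']
    ring
  have hE : a ^ 2 + a * b * (m : ℝ) + b ^ 2 = 1 := by
    apply mul_right_cancel₀ (ne_of_gt hN)
    rw [one_mul]
    rw [show (a ^ 2 + a * b * (m : ℝ) + b ^ 2) * N
        = a ^ 2 * N + a * b * ((m : ℝ) * N) + b ^ 2 * N by ring, ← hexp, hnorm]
  -- move to integers
  have hmint : m = 0 ∨ m = -1 := by
    have h1 : (-2 : ℤ) < m := by exact_mod_cast hm2
    have h2 : m ≤ 0 := by exact_mod_cast hm0
    omega
  have hEi : na ^ 2 + na * nb * m + nb ^ 2 = 1 := by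
    have : ((na ^ 2 + na * nb * m + nb ^ 2 : ℤ) : ℝ) = ((1 : ℤ) : ℝ) := by
      push_cast
      rw [← hna, ← hnb]
      exact hE
    exact_mod_cast this
  have hna0 : 0 ≤ na := by
    have : (0 : ℝ) ≤ (na : ℝ) := hna ▸ ha0
    exact_mod_cast this
  have hnb0 : 0 ≤ nb := by
    have : (0 : ℝ) ≤ (nb : ℝ) := hnb ▸ hb0
    exact_mod_cast this
  rcases stmt16_int_solve hna0 hnb0 hmint hEi with ⟨h1, h2⟩ | ⟨h1, h2⟩ | ⟨h1, h2⟩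
  · left
    rw [hab, hna, hnb, h1, h2]
    norm_num
  · right; left
    rw [hab, hna, hnb, h1, h2]
    norm_num
  · right; right
    rw [hab, hna, hnb, h1, h2]
    norm_num

end SimplyLacedRootSystem
open SimplyLacedRootSystem in
/-- Let β, β' ∈ Δ with β ≠ β', and let α, α' ∈ R⁺ be such that
s_β s_{β'} = s_α s_{α'} in W. Then α ∈ {β, β'} or α' ∈ {β, β'}. -/
theorem stmt16 (P : SimplyLacedRootSystem V)
    (β β' : V) (hβ : β ∈ P.base) (hβ' : β' ∈ P.base) (hne : β ≠ β')
    (α α' : V) (hα : α ∈ P.pos) (hα' : α' ∈ P.pos)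
    (heq : sRefl β * sRefl β' = sRefl α * sRefl α') :
    α ∈ ({β, β'} : Set V) ∨ α' ∈ ({β, β'} : Set V) := by
  have hβ'r : β' ∈ P.roots := P.base_subset hβ'
  by_cases hsame : α = α'
  · exfalso
    subst hsame
    have h1 : ∀ x, sRefl β (sRefl β' x) = x := by
      intro x
      have h0 : (sRefl β * sRefl β') x = (sRefl α * sRefl α) x :=
        DFunLike.congr_fun heq x
      calc sRefl β (sRefl β' x) = (sRefl β * sRefl β') x := rfl
        _ = (sRefl α * sRefl α) x := h0
        _ = x := sRefl_invol α x
    have hb := h1 β'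
    have h2 : ⟪β', β'⟫_ℝ ≠ 0 :=
      ne_of_gt (inner_self_pos_of_root (P := P) hβ'r)
    have hsb : sRefl β' β' = -β' := by
      rw [sRefl_apply, mul_div_assoc, div_self h2, mul_one, two_smul]
      abel
    rw [hsb, map_neg, sRefl_apply] at hb
    set c := 2 * ⟪β', β⟫_ℝ / ⟪β, β⟫_ℝ with hc
    have h3 : c • β - β' = β' := by rw [← neg_sub]; exact hb
    have hz : c • β + (-2 : ℝ) • β' = 0 := by
      have h4 : c • β + (-2 : ℝ) • β' = (c • β - β') - β' := by
        rw [neg_smul, two_smul]; abel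
      rw [h4, h3, sub_self]
    have := (pair_indep hβ hβ' hne hz).2
    norm_num at this
  · have hperpα : ∀ x : V, ⟪x, β⟫_ℝ = 0 → ⟪x, β'⟫_ℝ = 0 → ⟪x, α⟫_ℝ = 0 := by
      intro x h1 h2
      have hfix : sRefl α (sRefl α' x) = x := by
        have h0 : (sRefl β * sRefl β') x = (sRefl α * sRefl α') x :=
          DFunLike.congr_fun heq x
        calc sRefl α (sRefl α' x) = (sRefl α * sRefl α') x := rfl
          _ = (sRefl β * sRefl β') x := h0.symm
          _ = sRefl β (sRefl β' x) := rfl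
          _ = x := by rw [sRefl_fix h2, sRefl_fix h1]
      exact (perp_of_fix hα hα' hsame hfix).1
    have hperpα' : ∀ x : V, ⟪x, β⟫_ℝ = 0 → ⟪x, β'⟫_ℝ = 0 → ⟪x, α'⟫_ℝ = 0 := by
      intro x h1 h2
      have hfix : sRefl α (sRefl α' x) = x := by
        have h0 : (sRefl β * sRefl β') x = (sRefl α * sRefl α') x :=
          DFunLike.congr_fun heq x
        calc sRefl α (sRefl α' x) = (sRefl β * sRefl β') x := h0.symm
          _ = sRefl β (sRefl β' x) := rfl
          _ = x := by rw [sRefl_fix h2, sRefl_fix h1]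
      exact (perp_of_fix hα hα' hsame hfix).2
    obtain ⟨a, b, hab⟩ := mem_span_pair_of_perp hperpα
    obtain ⟨a', b', hab'⟩ := mem_span_pair_of_perp hperpα'
    rcases classify hβ hβ' hne hα hab with h | h | h
    · left; rw [h]; exact Set.mem_insert _ _
    · left; rw [h]; exact Set.mem_insert_of_mem _ rfl
    · rcases classify hβ hβ' hne hα' hab' with h' | h' | h'
      · right; rw [h']; exact Set.mem_insert _ _
      · right; rw [h']; exact Set.mem_insert_of_mem _ rfl
      · exact absurd (h.trans h'.symm) hsame
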